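/- Let A = K{x} be the free magma algebra in one variable over a field K of characteristic 0, D the derivation with D(x)=1, and A_0 = ker D. For n ≥ 2, the dimension of the degree-n homogeneous component (A_0)_n equals c_n − c_{n−1}, where c_n = (2(n−1))! / (n!(n−1)!) is the n-th Catalan-type number (c_1 = 1, c_2 = 1, c_3 = 2, c_4 = 5, ...). -/

import Mathlib

noncomputable section

/-- The free unital magma algebra `K{x}` in one variable. -/
abbrev FreeMagmaAlgebra1 (K : Type*) [Field K] : Type _ :=
  MonoidAlgebra K (WithOne (FreeMagma Unit))

/-- The generator `x` of `K{x}`. -/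
def genx (K : Type*) [Field K] : FreeMagmaAlgebra1 K :=
  MonoidAlgebra.of K (WithOne (FreeMagma Unit)) (FreeMagma.of ())

/-- Degree of a monomial: the unit has degree 0, a magma monomial has its length. -/
def degW : WithOne (FreeMagma Unit) → ℕ :=
  WithOne.recOneCoe 0 fun t => t.length

/-- The homogeneous component of degree `n` of `K{x}`, as a submodule. -/
def homogComponent (K : Type*) [Field K] (n : ℕ) : Submodule K (FreeMagmaAlgebra1 K) :=
  MonoidAlgebra.supported K K {m : WithOne (FreeMagma Unit) | degW m = n}

/-- The Catalan-type numbers `c_n = (2(n−1))!/(n!(n−1)!)`. -/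
def catalanC (n : ℕ) : ℕ := (2 * (n - 1)).factorial / (n.factorial * (n - 1).factorial)

namespace DimAux

def toTree : FreeMagma Unit → Tree Unit
  | FreeMagma.of _ => Tree.nil
  | FreeMagma.mul a b => Tree.node () (toTree a) (toTree b)

def ofTree : Tree Unit → FreeMagma Unit
  | BinaryTree.nil => FreeMagma.of ()
  | BinaryTree.node _ a b => FreeMagma.mul (ofTree a) (ofTree b)

lemma ofTree_toTree (t : FreeMagma Unit) : ofTree (toTree t) = t := by
  induction t with
  | ih1 u => rfl
  | ih2 a b ha hb => simp [toTree, ofTree, ha, hb]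

lemma toTree_ofTree (t : Tree Unit) : toTree (ofTree t) = t := by
  induction t with
  | nil => rfl
  | node u a b ha hb => simp [toTree, ofTree, ha, hb]

lemma length_eq (t : FreeMagma Unit) : t.length = (toTree t).numNodes + 1 := by
  induction t with
  | ih1 u => rfl
  | ih2 a b ha hb => simp [toTree, FreeMagma.length, Tree.numNodes, ha, hb]; omega

def treeEquiv : FreeMagma Unit ≃ Tree Unit :=
  ⟨toTree, ofTree, ofTree_toTree, toTree_ofTree⟩

lemma card_length (m : ℕ) :
    Nat.card {t : FreeMagma Unit | t.length = m + 1} = catalan m := by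
  have e : {t : FreeMagma Unit | t.length = m + 1} ≃ {t : Tree Unit | t.numNodes = m} := by
    refine (Equiv.subtypeEquiv treeEquiv ?_)
    intro t
    simp [treeEquiv, length_eq]
  rw [Nat.card_congr e]
  have : {t : Tree Unit | t.numNodes = m} = ↑(Tree.treesOfNumNodesEq m) := by
    ext t; simp [BinaryTree.mem_treesOfNumNodesEq]
  rw [this, Nat.card_coe_set_eq, Set.ncard_coe_finset,
    BinaryTree.treesOfNumNodesEq_card_eq_catalan]

lemma catalanC_eq (m : ℕ) : catalanC (m + 1) = catalan m := by
  have h1 : (2 * m).factorial = catalan m * ((m + 1).factorial * m.factorial) := by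
    have h2 := succ_mul_catalan_eq_centralBinom m
    have h3 := Nat.choose_mul_factorial_mul_factorial (Nat.le_mul_of_pos_left m (by norm_num) : m ≤ 2 * m)
    rw [Nat.centralBinom] at h2
    have : 2 * m - m = m := by omega
    rw [this] at h3
    calc (2 * m).factorial = (2*m).choose m * m.factorial * m.factorial := h3.symm
    _ = ((m+1) * catalan m) * m.factorial * m.factorial := by rw [h2]
    _ = catalan m * ((m + 1).factorial * m.factorial) := by
        rw [Nat.factorial_succ]; ring
  unfold catalanC
  simp only [Nat.add_sub_cancel]
  rw [h1, Nat.mul_div_cancel _ (by positivity)]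



lemma degW_one : degW 1 = 0 := rfl

lemma degW_coe (t : FreeMagma Unit) : degW ↑t = t.length := rfl

lemma degW_mul (a b : WithOne (FreeMagma Unit)) : degW (a * b) = degW a + degW b := by
  induction a using WithOne.recOneCoe with
  | one => simp [degW_one]
  | coe s =>
    induction b using WithOne.recOneCoe with
    | one => simp [degW_one]
    | coe t =>
      have : (↑s * ↑t : WithOne (FreeMagma Unit)) = ↑(s * t) := (WithOne.coe_mul s t).symm
      rw [this, degW_coe, degW_coe, degW_coe]
      rfl

variable {K : Type*} [Field K]

lemma mul_mem_homog {f g : FreeMagmaAlgebra1 K} {a b : ℕ}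
    (hf : f ∈ homogComponent K a) (hg : g ∈ homogComponent K b) :
    f * g ∈ homogComponent K (a + b) := by
  classical
  rw [homogComponent, MonoidAlgebra.mem_supported] at *
  refine subset_trans (Finset.coe_subset.2 (MonoidAlgebra.support_coeff_mul_subset f g)) ?_
  intro m hm
  simp only [Finset.coe_mul, Set.mem_mul] at hm
  obtain ⟨u, hu, v, hv, rfl⟩ := hm
  have := hf hu
  have := hg hv
  simp only [Set.mem_setOf_eq] at *
  rw [degW_mul]; omega

lemma single_mem_homog (m : WithOne (FreeMagma Unit)) (c : K) :
    MonoidAlgebra.single m c ∈ homogComponent K (degW m) := by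
  rw [homogComponent, MonoidAlgebra.mem_supported]
  refine subset_trans (Finset.coe_subset.2 Finsupp.support_single_subset) ?_
  simp

lemma one_mem_homog : (1 : FreeMagmaAlgebra1 K) ∈ homogComponent K 0 := by
  have := single_mem_homog (K := K) 1 1
  rwa [degW_one, ← MonoidAlgebra.one_def] at this

end DimAux

namespace DimAux
variable {K : Type*} [Field K]
variable (D : FreeMagmaAlgebra1 K →ₗ[K] FreeMagmaAlgebra1 K)
variable (hD : ∀ f g : FreeMagmaAlgebra1 K, D (f * g) = D f * g + f * D g)
variable (hDx : D (genx K) = 1)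

include hD in
lemma D_one : D 1 = 0 := by
  have h := hD 1 1
  simp only [mul_one, one_mul] at h
  have : D 1 = D 1 + D 1 := h
  exact (left_eq_add.mp this)

include hD hDx in
lemma D_single_mem (t : FreeMagma Unit) :
    D (MonoidAlgebra.single (↑t) (1:K)) ∈ homogComponent K (t.length - 1) := by
  induction t with
  | ih1 u =>
    have hx : (MonoidAlgebra.single (↑(FreeMagma.of ())) (1:K)) = genx K := rfl
    have hu : u = () := rfl
    rw [hu, hx, hDx]
    simpa using (one_mem_homog (K := K))
  | ih2 a b ha hb =>
    have hsplit : (MonoidAlgebra.single ((↑(a * b)) : WithOne (FreeMagma Unit)) (1:K))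
        = MonoidAlgebra.single ((↑a) : WithOne (FreeMagma Unit)) (1:K)
          * MonoidAlgebra.single ((↑b) : WithOne (FreeMagma Unit)) (1:K) := by
      rw [MonoidAlgebra.single_mul_single, one_mul]
      exact congrArg (fun w => MonoidAlgebra.single w (1:K)) (WithOne.coe_mul a b)
    rw [hsplit, hD]
    have hpa : 0 < a.length := FreeMagma.length_pos a
    have hpb : 0 < b.length := FreeMagma.length_pos b
    have h1 : D (MonoidAlgebra.single (↑a) (1:K)) * MonoidAlgebra.single ((↑b) : WithOne (FreeMagma Unit)) (1:K)
        ∈ homogComponent K ((a.length - 1) + b.length) :=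
      mul_mem_homog ha (by simpa [degW_coe] using single_mem_homog (K := K) (↑b) 1)
    have h2 : MonoidAlgebra.single ((↑a) : WithOne (FreeMagma Unit)) (1:K) * D (MonoidAlgebra.single (↑b) (1:K))
        ∈ homogComponent K (a.length + (b.length - 1)) :=
      mul_mem_homog (by simpa [degW_coe] using single_mem_homog (K := K) (↑a) 1) hb
    have e1 : (a.length - 1) + b.length = (a * b).length - 1 := by
      show _ = a.length + b.length - 1; omega
    have e2 : a.length + (b.length - 1) = (a * b).length - 1 := by
      show _ = a.length + b.length - 1; omega
    rw [e1] at h1; rw [e2] at h2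
    exact Submodule.add_mem _ h1 h2

lemma homog_eq_span (n : ℕ) : homogComponent K n
    = Submodule.span K ((fun m => MonoidAlgebra.single m (1:K)) ''
        {m : WithOne (FreeMagma Unit) | degW m = n}) :=
  MonoidAlgebra.supported_eq_span_single K _

include hD hDx in
lemma D_maps {m : ℕ} {f : FreeMagmaAlgebra1 K} (hf : f ∈ homogComponent K m) :
    D f ∈ homogComponent K (m - 1) := by
  have hle : homogComponent K m ≤ (homogComponent K (m-1)).comap D := by
    rw [homog_eq_span, Submodule.span_le]
    rintro _ ⟨w, hw, rfl⟩
    simp only [Set.mem_setOf_eq] at hw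
    simp only [SetLike.mem_coe, Submodule.mem_comap]
    induction w using WithOne.recOneCoe with
    | one =>
      rw [← MonoidAlgebra.one_def, D_one D hD]
      exact Submodule.zero_mem _
    | coe t =>
      rw [degW_coe] at hw
      rw [← hw]
      exact D_single_mem D hD hDx t
  exact hle hf

include hD in
lemma D_homog_zero {f : FreeMagmaAlgebra1 K} (hf : f ∈ homogComponent K 0) : D f = 0 := by
  have hle : homogComponent K 0 ≤ LinearMap.ker D := by
    rw [homog_eq_span, Submodule.span_le]
    rintro _ ⟨w, hw, rfl⟩
    simp only [Set.mem_setOf_eq] at hw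
    have hw1 : w = 1 := by
      induction w using WithOne.recOneCoe with
      | one => rfl
      | coe t =>
        rw [degW_coe] at hw
        exact absurd hw (FreeMagma.length_pos t).ne'
    subst hw1
    simp only [SetLike.mem_coe, LinearMap.mem_ker, ← MonoidAlgebra.one_def]
    exact D_one D hD
  exact hle hf

/-- Right multiplication by `x`. -/
def R (K : Type*) [Field K] : FreeMagmaAlgebra1 K →ₗ[K] FreeMagmaAlgebra1 K :=
  LinearMap.mulRight K (genx K)

lemma R_apply (f : FreeMagmaAlgebra1 K) : R K f = f * genx K := rfl

lemma genx_mem_homog : genx K ∈ homogComponent K 1 := by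
  have := single_mem_homog ((↑(FreeMagma.of ())) : WithOne (FreeMagma Unit)) (1:K)
  rwa [show degW (↑(FreeMagma.of ())) = 1 from rfl] at this

lemma R_mem {m : ℕ} {f : FreeMagmaAlgebra1 K} (hf : f ∈ homogComponent K m) :
    R K f ∈ homogComponent K (m + 1) :=
  mul_mem_homog hf genx_mem_homog

lemma Rpow_mem {f : FreeMagmaAlgebra1 K} {m : ℕ} (k : ℕ) (hf : f ∈ homogComponent K m) :
    ((R K) ^ k) f ∈ homogComponent K (m + k) := by
  induction k with
  | zero => simpa using hf
  | succ j ih =>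
    have : ((R K) ^ (j + 1)) f = R K (((R K) ^ j) f) := by
      rw [pow_succ']; rfl
    rw [this, ← add_assoc]
    exact R_mem ih

include hD hDx in
lemma comm (f : FreeMagmaAlgebra1 K) : D (R K f) = R K (D f) + f := by
  rw [R_apply, hD, hDx, mul_one, R_apply]

include hD hDx in
lemma comm_pow (k : ℕ) (f : FreeMagmaAlgebra1 K) :
    D (((R K) ^ (k + 1)) f) = ((R K) ^ (k + 1)) (D f) + ((k + 1 : ℕ) : K) • (((R K) ^ k) f) := by
  induction k generalizing f with
  | zero => simpa using comm D hD hDx f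
  | succ j ih =>
    have h1 : ∀ g : FreeMagmaAlgebra1 K, ((R K) ^ (j + 2)) g = ((R K) ^ (j + 1)) (R K g) := by
      intro g; rw [pow_succ]; rfl
    rw [h1 f, ih (R K f), comm D hD hDx f, map_add, h1 (D f)]
    have h2 : ((R K) ^ (j + 1)) f = ((R K) ^ j) (R K f) := by rw [pow_succ]; rfl
    rw [h2]
    push_cast
    module

include hD hDx in
lemma Dpow_mem {m : ℕ} {f : FreeMagmaAlgebra1 K} (hf : f ∈ homogComponent K m) (k : ℕ) :
    (D ^ k) f ∈ homogComponent K (m - k) := by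
  induction k with
  | zero => simpa using hf
  | succ j ih =>
    have h1 : (D ^ (j + 1)) f = D ((D ^ j) f) := by rw [pow_succ']; rfl
    rw [h1, show m - (j+1) = (m - j) - 1 by omega]
    exact D_maps D hD hDx ih

include hD hDx in
lemma Dpow_vanish {m : ℕ} {f : FreeMagmaAlgebra1 K} (hf : f ∈ homogComponent K m) :
    (D ^ (m + 1)) f = 0 := by
  have h1 : (D ^ (m + 1)) f = D ((D ^ m) f) := by rw [pow_succ']; rfl
  rw [h1]
  exact D_homog_zero D hD (by simpa using Dpow_mem D hD hDx hf m)

/-- Coefficients `a k = (-1)^k / (k+1)!`. -/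
def acoef (K : Type*) [Field K] (k : ℕ) : K := (-1) ^ k * (((k + 1).factorial : K))⁻¹

lemma acoef_zero : acoef K 0 = 1 := by simp [acoef]

lemma acoef_rec [CharZero K] (k : ℕ) :
    ((k + 2 : ℕ) : K) * acoef K (k + 1) = - acoef K k := by
  have h2 : ((k + 2).factorial : K) ≠ 0 := Nat.cast_ne_zero.2 (Nat.factorial_ne_zero _)
  have h1 : ((k + 1).factorial : K) ≠ 0 := Nat.cast_ne_zero.2 (Nat.factorial_ne_zero _)
  have hfac : ((k + 2).factorial : K) = ((k + 2 : ℕ) : K) * ((k + 1).factorial : K) := by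
    rw [show (k+2).factorial = (k+2) * (k+1).factorial from rfl]
    push_cast; ring
  have hc : ((k + 2 : ℕ) : K) ≠ 0 := Nat.cast_ne_zero.2 (by omega)
  have key : ((k + 2 : ℕ) : K) * (((k + 2 : ℕ) : K) * ((k + 1).factorial : K))⁻¹
      = (((k + 1).factorial : K))⁻¹ := by
    rw [mul_inv, ← mul_assoc, mul_inv_cancel₀ hc, one_mul]
  rw [acoef, acoef, hfac, pow_succ]
  calc ((k + 2 : ℕ) : K) * ((-1) ^ k * (-1) * (((k + 2 : ℕ) : K) * ((k + 1).factorial : K))⁻¹)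
      = -((-1) ^ k * (((k + 2 : ℕ) : K) * (((k + 2 : ℕ) : K) * ((k + 1).factorial : K))⁻¹)) := by
        ring
    _ = -((-1) ^ k * (((k + 1).factorial : K))⁻¹) := by rw [key]

include hD hDx in
lemma D_surj [CharZero K] {m : ℕ} {f : FreeMagmaAlgebra1 K} (hf : f ∈ homogComponent K m) :
    ∃ g ∈ homogComponent K (m + 1), D g = f := by
  classical
  set g : FreeMagmaAlgebra1 K :=
    ∑ k ∈ Finset.range (m + 1), acoef K k • (((R K) ^ (k + 1)) ((D ^ k) f)) with hg
  refine ⟨g, ?_, ?_⟩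
  · rw [hg]
    refine Submodule.sum_mem _ fun k hk => Submodule.smul_mem _ _ ?_
    have h1 := Rpow_mem (K := K) (k + 1) (Dpow_mem D hD hDx hf k)
    have hk' : k ≤ m := by simpa using Nat.lt_succ_iff.mp (Finset.mem_range.mp hk)
    rwa [show m - k + (k + 1) = m + 1 by omega] at h1
  · -- telescoping
    set G : ℕ → FreeMagmaAlgebra1 K :=
      fun k => (((k + 1 : ℕ) : K) * acoef K k) • (((R K) ^ k) ((D ^ k) f)) with hG
    have hterm : ∀ k, D (acoef K k • (((R K) ^ (k + 1)) ((D ^ k) f))) = G k - G (k + 1) := by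
      intro k
      rw [map_smul, comm_pow D hD hDx k ((D ^ k) f)]
      have hDk : D ((D ^ k) f) = (D ^ (k + 1)) f := by rw [pow_succ']; rfl
      rw [hDk, hG]
      simp only
      rw [acoef_rec (K := K) k]
      push_cast
      module
    rw [hg, map_sum]
    simp only [hterm]
    rw [Finset.sum_range_sub' G]
    have hG0 : G 0 = f := by simp [hG, acoef_zero]
    have hGend : G (m + 1) = 0 := by
      have := Dpow_vanish D hD hDx hf
      simp [hG, this]
    rw [hG0, hGend, sub_zero]

def wEquiv (m : ℕ) : {t : FreeMagma Unit | t.length = m + 1} ≃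
    {w : WithOne (FreeMagma Unit) | degW w = m + 1} := by
  refine Equiv.ofBijective (fun t => ⟨(↑t.1 : WithOne (FreeMagma Unit)), by
    simp only [Set.mem_setOf_eq, degW_coe]; exact t.2⟩) ⟨?_, ?_⟩
  · rintro ⟨a, ha⟩ ⟨b, hb⟩ h
    simpa [WithOne.coe_inj] using (Subtype.mk_eq_mk.mp h)
  · rintro ⟨w, hw⟩
    have hne : w ≠ 1 := by
      intro h; subst h; simp [degW_one] at hw
    obtain ⟨t, rfl⟩ := WithOne.ne_one_iff_exists.mp hne
    exact ⟨⟨t, by simpa [degW_coe] using hw⟩, rfl⟩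

lemma card_degW (m : ℕ) :
    Nat.card {w : WithOne (FreeMagma Unit) | degW w = m + 1} = catalan m := by
  rw [← Nat.card_congr (wEquiv m)]
  exact card_length m

instance tree_finite (m : ℕ) : Finite {t : Tree Unit | t.numNodes = m} := by
  have : {t : Tree Unit | t.numNodes = m} = ↑(Tree.treesOfNumNodesEq m) := by
    ext t; simp [BinaryTree.mem_treesOfNumNodesEq]
  rw [this]
  exact (Tree.treesOfNumNodesEq m).finite_toSet

instance length_finite (m : ℕ) : Finite {t : FreeMagma Unit | t.length = m + 1} := by
  have e : {t : FreeMagma Unit | t.length = m + 1} ≃ {t : Tree Unit | t.numNodes = m} := by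
    refine (Equiv.subtypeEquiv treeEquiv ?_)
    intro t
    simp [treeEquiv, length_eq]
  exact Finite.of_equiv _ e.symm

instance degW_finite (m : ℕ) : Finite {w : WithOne (FreeMagma Unit) | degW w = m + 1} :=
  Finite.of_equiv _ (wEquiv m)

lemma fd_homog (m : ℕ) : FiniteDimensional K ↥(homogComponent K (m + 1)) := by
  classical
  letI : Fintype {w : WithOne (FreeMagma Unit) | degW w = m + 1} := Fintype.ofFinite _
  have e : ↥(homogComponent K (m + 1)) ≃ₗ[K]
      ({w : WithOne (FreeMagma Unit) | degW w = m + 1} →₀ K) :=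
    MonoidAlgebra.supportedEquivFinsupp _
  exact Module.Finite.equiv e.symm

lemma finrank_homog (m : ℕ) :
    Module.finrank K ↥(homogComponent K (m + 1)) = catalan m := by
  classical
  letI : Fintype {w : WithOne (FreeMagma Unit) | degW w = m + 1} := Fintype.ofFinite _
  have e : ↥(homogComponent K (m + 1)) ≃ₗ[K]
      ({w : WithOne (FreeMagma Unit) | degW w = m + 1} →₀ K) :=
    MonoidAlgebra.supportedEquivFinsupp _
  rw [e.finrank_eq, Module.finrank_finsupp_self, ← Nat.card_eq_fintype_card, card_degW]

end DimAux

open DimAux in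
/-- For `n ≥ 2`, the degree-`n` homogeneous component of the algebra of
constants `A_0 = ker D` has dimension `c_n − c_{n−1}`. -/
theorem dim_constants (K : Type*) [Field K] [CharZero K]
    (D : FreeMagmaAlgebra1 K →ₗ[K] FreeMagmaAlgebra1 K)
    (hD : ∀ f g : FreeMagmaAlgebra1 K, D (f * g) = D f * g + f * D g)
    (hDx : D (genx K) = 1)
    (n : ℕ) (hn : 2 ≤ n) :
    Module.finrank K ↥(LinearMap.ker D ⊓ homogComponent K n) = catalanC n - catalanC (n - 1) := by
  classical
  set p := homogComponent K n with hp
  set q := homogComponent K (n - 1) with hq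
  haveI : FiniteDimensional K ↥p := by
    rw [hp, show n = (n - 1) + 1 by omega]; exact fd_homog (n - 1)
  haveI : FiniteDimensional K ↥q := by
    rw [hq, show n - 1 = (n - 2) + 1 by omega]; exact fd_homog (n - 2)
  have hmap : ∀ x ∈ p, D x ∈ q := by
    intro x hx
    have := D_maps D hD hDx (m := n) hx
    rwa [hq]
  set D' := D.restrict hmap with hD'
  have hsurj : Function.Surjective D' := by
    rintro ⟨y, hy⟩
    obtain ⟨g, hg, hgD⟩ := D_surj D hD hDx (m := n - 1) hy
    rw [show n - 1 + 1 = n by omega] at hg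
    refine ⟨⟨g, hg⟩, ?_⟩
    apply Subtype.ext
    simpa [hD', LinearMap.restrict_apply] using hgD
  have hrange : LinearMap.range D' = ⊤ := LinearMap.range_eq_top.2 hsurj
  have h1 := LinearMap.finrank_range_add_finrank_ker D'
  rw [hrange, finrank_top] at h1
  -- identify ker D' with ker D ⊓ p
  have hker : LinearMap.ker D' = Submodule.comap p.subtype (LinearMap.ker D ⊓ p) := by
    rw [hD', LinearMap.ker_restrict, Submodule.comap_inf, Submodule.comap_subtype_self,
      inf_top_eq]
  have hkeq : Module.finrank K ↥(LinearMap.ker D ⊓ p)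
      = Module.finrank K ↥(LinearMap.ker D') := by
    rw [hker]
    set_option synthInstance.maxHeartbeats 1000000 in
    exact (Submodule.comapSubtypeEquivOfLe (inf_le_right :
      LinearMap.ker D ⊓ p ≤ p)).finrank_eq.symm
  have hfp : Module.finrank K ↥p = catalan (n - 1) := by
    rw [hp, show n = (n - 2) + 1 + 1 by omega]
    rw [finrank_homog]
    congr 1
  have hfq : Module.finrank K ↥q = catalan (n - 2) := by
    rw [hq, show n - 1 = (n - 2) + 1 by omega, finrank_homog]
  have hc1 : catalanC n = catalan (n - 1) := by
    rw [show n = (n - 1) + 1 by omega, catalanC_eq]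
    congr 1
  have hc2 : catalanC (n - 1) = catalan (n - 2) := by
    rw [show n - 1 = (n - 2) + 1 by omega, catalanC_eq]
  have hle : catalan (n - 2) ≤ catalan (n - 1) := by omega
  rw [hkeq, hc1, hc2]
  omega
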